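/- (Simulation of strategies.) Let Φ = Φ_NS be a density operator on H_N ⊗ H_S and Ψ = Ψ_NT a density operator on H_N ⊗ H_T, and suppose Φ is better than Ψ. Then for every finite-dimensional H_A, H_B, every density operator ρ_AB on H_A ⊗ H_B, every k, and every POVM (E^1, …, E^k) on H_T ⊗ H_A, there exists a POVM (D^1, …, D^k) on H_S ⊗ H_A such that for each i, tr_{SA}[ (Φ ⊗ ρ_AB) · (I_{NB} ⊗ D^i) ] = tr_{TA}[ (Ψ ⊗ ρ_AB) · (I_{NB} ⊗ E^i) ] as operators on H_N ⊗ H_B, where tr_{SA} (resp. tr_{TA}) denotes the partial trace over H_S ⊗ H_A (resp. H_T ⊗ H_A), the tensor factors being reordered appropriately. -/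

import Mathlib

open Matrix Kronecker BigOperators
open scoped ComplexOrder

/-- A density operator: positive semidefinite with trace 1. -/
def IsDensity {ι : Type} [Fintype ι] (A : Matrix ι ι ℂ) : Prop :=
  A.PosSemidef ∧ A.trace = 1

/-- A POVM with `k` outcomes: positive semidefinite operators summing to the identity. -/
def IsPOVM {ι : Type} [Fintype ι] [DecidableEq ι] {k : ℕ}
    (D : Fin k → Matrix ι ι ℂ) : Prop :=
  (∀ i, (D i).PosSemidef) ∧ ∑ i, D i = 1

/-- Reindexing that aligns the tensor factors N⊗S⊗A⊗B with (N⊗B)⊗(S⊗A). -/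
def reord {n s a b : ℕ} :
    (Fin n × Fin s) × (Fin a × Fin b) → (Fin n × Fin b) × (Fin s × Fin a) :=
  fun p => ((p.1.1, p.2.2), (p.1.2, p.2.1))

/-- The expected payoff `tr((Φ ⊗ ρ)·(M ⊗ D))`, with tensor factors reordered so that
`M` acts on `H_N ⊗ H_B` and `D` acts on `H_S ⊗ H_A`. -/
noncomputable def payoff {n s a b : ℕ}
    (Φ : Matrix (Fin n × Fin s) (Fin n × Fin s) ℂ)
    (ρ : Matrix (Fin a × Fin b) (Fin a × Fin b) ℂ)
    (M : Matrix (Fin n × Fin b) (Fin n × Fin b) ℂ)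
    (D : Matrix (Fin s × Fin a) (Fin s × Fin a) ℂ) : ℝ :=
  (((Φ ⊗ₖ ρ) * ((M ⊗ₖ D).submatrix reord reord)).trace).re

/-- The value of the game `(ρ, M^1, …, M^k)` over the information structure `Φ`:
the maximal expected payoff over all strategies (POVMs on `H_S ⊗ H_A`). -/
noncomputable def Rval {n s a b k : ℕ}
    (Φ : Matrix (Fin n × Fin s) (Fin n × Fin s) ℂ)
    (ρ : Matrix (Fin a × Fin b) (Fin a × Fin b) ℂ)
    (M : Fin k → Matrix (Fin n × Fin b) (Fin n × Fin b) ℂ) : ℝ :=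
  sSup {r : ℝ | ∃ D : Fin k → Matrix (Fin s × Fin a) (Fin s × Fin a) ℂ,
    IsPOVM D ∧ r = ∑ i, payoff Φ ρ (M i) (D i)}

/-- `Φ` is better than `Ψ`: in every game (environment `ρ_AB` together with Hermitian
payoff observables `M^1, …, M^k` on `H_N ⊗ H_B`) the value over `Φ` is at least the
value over `Ψ`. -/
def Better {n s t : ℕ}
    (Φ : Matrix (Fin n × Fin s) (Fin n × Fin s) ℂ)
    (Ψ : Matrix (Fin n × Fin t) (Fin n × Fin t) ℂ) : Prop :=
  ∀ (a b k : ℕ) (ρ : Matrix (Fin a × Fin b) (Fin a × Fin b) ℂ)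
    (M : Fin k → Matrix (Fin n × Fin b) (Fin n × Fin b) ℂ),
    IsDensity ρ → (∀ i, (M i).IsHermitian) →
      Rval Ψ ρ M ≤ Rval Φ ρ M


/-- `tr_{SA}[ (Φ ⊗ ρ_AB) · (I_{NB} ⊗ D) ]`: the (unnormalized) state of `N ⊗ B`
after the measurement outcome corresponding to `D`, tensor factors reordered so
that `D` acts on `H_S ⊗ H_A`. -/
noncomputable def postState {n s a b : ℕ}
    (Φ : Matrix (Fin n × Fin s) (Fin n × Fin s) ℂ)
    (ρ : Matrix (Fin a × Fin b) (Fin a × Fin b) ℂ)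
    (D : Matrix (Fin s × Fin a) (Fin s × Fin a) ℂ) :
    Matrix (Fin n × Fin b) (Fin n × Fin b) ℂ :=
  Matrix.of fun p q => ∑ σ : Fin s, ∑ α : Fin a,
    ((Φ ⊗ₖ ρ) *
      (((1 : Matrix (Fin n × Fin b) (Fin n × Fin b) ℂ) ⊗ₖ D).submatrix reord reord))
      ((p.1, σ), (α, p.2)) ((q.1, σ), (α, q.2))

/-! ### Auxiliary material for the proof -/

open scoped MatrixOrder Matrix.Norms.L2Operator in
theorem psd_exists_conjTranspose_mul_self {ι : Type} [Fintype ι] [DecidableEq ι]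
    {A : Matrix ι ι ℂ} (hA : A.PosSemidef) : ∃ B : Matrix ι ι ℂ, A = Bᴴ * B := by
  obtain ⟨B, hB⟩ := CStarAlgebra.nonneg_iff_eq_star_mul_self.mp hA.nonneg
  exact ⟨B, hB⟩

attribute [local instance] Matrix.normedAddCommGroup Matrix.normedSpace

set_option linter.unusedSectionVars false
set_option linter.unusedVariables false

namespace Sim

variable {n s a b : ℕ}

theorem postState_eq
    (Φ : Matrix (Fin n × Fin s) (Fin n × Fin s) ℂ)
    (ρ : Matrix (Fin a × Fin b) (Fin a × Fin b) ℂ)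
    (D : Matrix (Fin s × Fin a) (Fin s × Fin a) ℂ)
    (p q : Fin n × Fin b) :
    postState Φ ρ D p q = ∑ σ : Fin s, ∑ α : Fin a, ∑ σ' : Fin s, ∑ α' : Fin a,
      (Φ ⊗ₖ ρ) ((p.1, σ), (α, p.2)) ((q.1, σ'), (α', q.2)) * D (σ', α') (σ, α) := by
  unfold postState
  simp only [Matrix.of_apply, Matrix.mul_apply, Matrix.submatrix_apply, reord,
    kroneckerMap_apply, Matrix.one_apply, Fintype.sum_prod_type, Prod.mk.injEq,
    ite_and, mul_ite, mul_one, mul_zero, ite_mul, zero_mul, one_mul,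
    Finset.sum_ite_irrel, Finset.sum_const_zero, Finset.sum_ite_eq,
    Finset.sum_ite_eq', Finset.mem_univ, if_true]

/-- The index bijection matching the two ways of writing the payoff trace. -/
def bigEquiv :
    (((Fin n × Fin s) × (Fin a × Fin b)) × ((Fin n × Fin s) × (Fin a × Fin b))) ≃
      (((Fin n × Fin b) × (Fin n × Fin b)) × ((Fin s × Fin a) × (Fin s × Fin a))) where
  toFun z := (((z.2.1.1, z.2.2.2), (z.1.1.1, z.1.2.2)), ((z.1.1.2, z.1.2.1), (z.2.1.2, z.2.2.1)))
  invFun w := (((w.1.2.1, w.2.1.1), (w.2.1.2, w.1.2.2)), ((w.1.1.1, w.2.2.1), (w.2.2.2, w.1.1.2)))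
  left_inv z := rfl
  right_inv w := rfl

theorem trace_key
    (Φ : Matrix (Fin n × Fin s) (Fin n × Fin s) ℂ)
    (ρ : Matrix (Fin a × Fin b) (Fin a × Fin b) ℂ)
    (M : Matrix (Fin n × Fin b) (Fin n × Fin b) ℂ)
    (D : Matrix (Fin s × Fin a) (Fin s × Fin a) ℂ) :
    ((Φ ⊗ₖ ρ) * ((M ⊗ₖ D).submatrix reord reord)).trace
      = (M * postState Φ ρ D).trace := by
  have lhs : ((Φ ⊗ₖ ρ) * ((M ⊗ₖ D).submatrix reord reord)).trace
      = ∑ z : (((Fin n × Fin s) × (Fin a × Fin b)) × ((Fin n × Fin s) × (Fin a × Fin b))),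
          (Φ ⊗ₖ ρ) z.1 z.2 * ((M ⊗ₖ D) (reord z.2) (reord z.1)) := by
    simp only [Matrix.trace, Matrix.diag_apply, Matrix.mul_apply, Matrix.submatrix_apply,
      Fintype.sum_prod_type]
  have rhs : (M * postState Φ ρ D).trace
      = ∑ w : (((Fin n × Fin b) × (Fin n × Fin b)) × ((Fin s × Fin a) × (Fin s × Fin a))),
          M w.1.1 w.1.2 *
            ((Φ ⊗ₖ ρ) ((w.1.2.1, w.2.1.1), (w.2.1.2, w.1.2.2))
              ((w.1.1.1, w.2.2.1), (w.2.2.2, w.1.1.2)) * D w.2.2 w.2.1) := by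
    simp only [Matrix.trace, Matrix.diag_apply, Matrix.mul_apply, postState_eq,
      Finset.mul_sum, Fintype.sum_prod_type]
  rw [lhs, rhs]
  refine Fintype.sum_equiv bigEquiv _ _ fun z => ?_
  simp only [bigEquiv, Equiv.coe_fn_mk, reord, kroneckerMap_apply]
  ring

theorem payoff_eq
    (Φ : Matrix (Fin n × Fin s) (Fin n × Fin s) ℂ)
    (ρ : Matrix (Fin a × Fin b) (Fin a × Fin b) ℂ)
    (M : Matrix (Fin n × Fin b) (Fin n × Fin b) ℂ)
    (D : Matrix (Fin s × Fin a) (Fin s × Fin a) ℂ) :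
    payoff Φ ρ M D = ((M * postState Φ ρ D).trace).re := by
  rw [payoff, trace_key]

/-- `postState Φ ρ` as a real-linear map in the strategy. -/
noncomputable def postStateL
    (Φ : Matrix (Fin n × Fin s) (Fin n × Fin s) ℂ)
    (ρ : Matrix (Fin a × Fin b) (Fin a × Fin b) ℂ) :
    Matrix (Fin s × Fin a) (Fin s × Fin a) ℂ →ₗ[ℝ]
      Matrix (Fin n × Fin b) (Fin n × Fin b) ℂ where
  toFun := postState Φ ρ
  map_add' D E := by
    ext p q
    simp only [postState_eq, Matrix.add_apply, mul_add, Finset.sum_add_distrib]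
  map_smul' c D := by
    ext p q
    simp only [postState_eq, Matrix.smul_apply, RingHom.id_apply, Finset.smul_sum,
      mul_smul_comm]

theorem postState_isHermitian
    {Φ : Matrix (Fin n × Fin s) (Fin n × Fin s) ℂ}
    {ρ : Matrix (Fin a × Fin b) (Fin a × Fin b) ℂ}
    {D : Matrix (Fin s × Fin a) (Fin s × Fin a) ℂ}
    (hΦ : Φ.IsHermitian) (hρ : ρ.IsHermitian) (hD : D.IsHermitian) :
    (postState Φ ρ D).IsHermitian := by
  have hG : ∀ (x y : (Fin n × Fin s) × (Fin a × Fin b)),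
      star ((Φ ⊗ₖ ρ) x y) = (Φ ⊗ₖ ρ) y x := by
    intro x y
    simp only [kroneckerMap_apply, star_mul']
    rw [hρ.apply, hΦ.apply, mul_comm]
  ext p q
  rw [Matrix.conjTranspose_apply, postState_eq, postState_eq]
  simp only [star_sum, star_mul', hG, hD.apply]
  simp only [← Fintype.sum_prod_type']
  exact Fintype.sum_equiv
    (⟨fun x => (x.2.2.1, (x.2.2.2, (x.1, x.2.1))),
      fun x => (x.2.2.1, (x.2.2.2, (x.1, x.2.1))), fun x => rfl, fun x => rfl⟩ :
      (Fin s × Fin a × Fin s × Fin a) ≃ (Fin s × Fin a × Fin s × Fin a))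
    _ _ (fun z => by simp only [Equiv.coe_fn_mk])

section POVM

variable {ι : Type} [Fintype ι] [DecidableEq ι] {k : ℕ}

lemma diag_nonneg {A : Matrix ι ι ℂ} (hA : A.PosSemidef) (p : ι) : 0 ≤ A p p := by
  have := hA.dotProduct_mulVec_nonneg (Pi.single p 1)
  simpa [dotProduct, Matrix.mulVec, Pi.single_apply, Finset.sum_ite_eq,
    Finset.sum_ite_eq'] using this

lemma povm_diag_le_one {D : Fin k → Matrix ι ι ℂ} (h : IsPOVM D) (i : Fin k) (p : ι) :
    (D i p p).re ≤ 1 := by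
  have hsum : ∑ j, D j p p = 1 := by
    have := congrFun (congrFun h.2 p) p
    simpa [Matrix.one_apply, Matrix.sum_apply] using this
  have hle : D i p p ≤ ∑ j, D j p p :=
    Finset.single_le_sum (f := fun j => D j p p)
      (fun j _ => diag_nonneg (h.1 j) p) (Finset.mem_univ i)
  rw [hsum] at hle
  simpa using (Complex.le_def.mp hle).1

lemma entry_sq_le {A : Matrix ι ι ℂ} (hA : A.PosSemidef) (p q : ι) :
    ‖A p q‖ ^ 2 ≤ (A p p).re * (A q q).re := by
  obtain ⟨B, hB⟩ := psd_exists_conjTranspose_mul_self hA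
  let u : EuclideanSpace ℂ ι := WithLp.toLp 2 (fun r => B r p)
  let v : EuclideanSpace ℂ ι := WithLp.toLp 2 (fun r => B r q)
  have hiuv : inner ℂ u v = A p q := by
    simp [hB, PiLp.inner_apply, Matrix.mul_apply, Matrix.conjTranspose_apply,
      RCLike.inner_apply, u, v, mul_comm]
  have hup : (RCLike.re (inner ℂ u u : ℂ)) = (A p p).re := by
    simp [-inner_self_eq_norm_sq_to_K, hB, PiLp.inner_apply, Matrix.mul_apply,
      Matrix.conjTranspose_apply, RCLike.inner_apply, u]
  have hvq : (RCLike.re (inner ℂ v v : ℂ)) = (A q q).re := by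
    simp [-inner_self_eq_norm_sq_to_K, hB, PiLp.inner_apply, Matrix.mul_apply,
      Matrix.conjTranspose_apply, RCLike.inner_apply, v]
  have h1 : ‖A p q‖ ≤ ‖u‖ * ‖v‖ := hiuv ▸ norm_inner_le_norm (𝕜 := ℂ) u v
  have h2 : ‖u‖ ^ 2 = (A p p).re := by rw [← hup]; exact (inner_self_eq_norm_sq (𝕜 := ℂ) u).symm
  have h3 : ‖v‖ ^ 2 = (A q q).re := by rw [← hvq]; exact (inner_self_eq_norm_sq (𝕜 := ℂ) v).symm
  calc ‖A p q‖ ^ 2 ≤ (‖u‖ * ‖v‖) ^ 2 := by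
        apply pow_le_pow_left₀ (norm_nonneg _) h1
      _ = (A p p).re * (A q q).re := by rw [mul_pow, h2, h3]

lemma povm_entry_bound {D : Fin k → Matrix ι ι ℂ} (h : IsPOVM D) (i : Fin k) (p q : ι) :
    ‖D i p q‖ ≤ 1 := by
  have h1 := entry_sq_le (h.1 i) p q
  have h2 := povm_diag_le_one h i p
  have h3 := povm_diag_le_one h i q
  have h4 : 0 ≤ (D i p p).re := by
    have := (Complex.le_def.mp (diag_nonneg (h.1 i) p)).1; simpa using this
  have h5 : 0 ≤ (D i q q).re := by
    have := (Complex.le_def.mp (diag_nonneg (h.1 i) q)).1; simpa using this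
  nlinarith [norm_nonneg (D i p q), sq_nonneg (‖D i p q‖ - 1)]

lemma isClosed_nonneg : IsClosed {z : ℂ | 0 ≤ z} := by
  have : {z : ℂ | 0 ≤ z} = Complex.re ⁻¹' (Set.Ici 0) ∩ Complex.im ⁻¹' {0} := by
    ext z
    simp [Complex.le_def, eq_comm]
  rw [this]
  exact (isClosed_Ici.preimage Complex.continuous_re).inter
    (isClosed_singleton.preimage Complex.continuous_im)

lemma isClosed_psd : IsClosed {A : Matrix ι ι ℂ | A.PosSemidef} := by
  have : {A : Matrix ι ι ℂ | A.PosSemidef} =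
      {A : Matrix ι ι ℂ | Aᴴ = A} ∩ ⋂ x : ι → ℂ, {A | 0 ≤ dotProduct (star x) (A *ᵥ x)} := by
    ext A; simp [Matrix.posSemidef_iff_dotProduct_mulVec, Matrix.IsHermitian, Set.mem_iInter]
  rw [this]
  refine IsClosed.inter ?_ (isClosed_iInter fun x => ?_)
  · exact isClosed_eq (continuous_id.matrix_conjTranspose) continuous_id
  · exact isClosed_nonneg.preimage ((continuous_const.dotProduct
      (continuous_id.matrix_mulVec continuous_const)))

lemma isClosed_povm : IsClosed {D : Fin k → Matrix ι ι ℂ | IsPOVM D} := by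
  have : {D : Fin k → Matrix ι ι ℂ | IsPOVM D} =
      (⋂ i : Fin k, {D : Fin k → Matrix ι ι ℂ | (D i).PosSemidef}) ∩
        {D : Fin k → Matrix ι ι ℂ | ∑ i, D i = 1} := by
    ext D; simp [IsPOVM, Set.mem_iInter, forall_and]
  rw [this]
  refine IsClosed.inter (isClosed_iInter fun i => ?_) ?_
  · exact isClosed_psd.preimage (continuous_apply (A := fun _ : Fin k => Matrix ι ι ℂ) i)
  · exact isClosed_eq (by continuity) continuous_const

lemma isCompact_povm : IsCompact {D : Fin k → Matrix ι ι ℂ | IsPOVM D} := by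
  have hsub : {D : Fin k → Matrix ι ι ℂ | IsPOVM D} ⊆ Metric.closedBall 0 1 := by
    intro D hD
    rw [Metric.mem_closedBall, dist_zero_right]
    refine pi_norm_le_iff_of_nonneg (by norm_num) |>.mpr fun i => ?_
    rw [Matrix.norm_le_iff (by norm_num : (0:ℝ) ≤ 1)]
    intro p q
    exact povm_entry_bound hD i p q
  exact (isCompact_closedBall (0 : Fin k → Matrix ι ι ℂ) 1).of_isClosed_subset
    isClosed_povm hsub

lemma convex_povm : Convex ℝ {D : Fin k → Matrix ι ι ℂ | IsPOVM D} := by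
  rintro D hD E hE θ τ hθ hτ hθτ
  constructor
  · intro i
    have hsm : ∀ (c : ℝ), 0 ≤ c → ∀ {A : Matrix ι ι ℂ}, A.PosSemidef → (c • A).PosSemidef := by
      intro c hc A hA
      refine Matrix.PosSemidef.of_dotProduct_mulVec_nonneg ?_ fun x => ?_
      · unfold Matrix.IsHermitian
        rw [Matrix.conjTranspose_smul, star_trivial, hA.1]
      · rw [Matrix.smul_mulVec, dotProduct_smul]
        exact smul_nonneg hc (hA.dotProduct_mulVec_nonneg x)
    exact Matrix.PosSemidef.add (hsm θ hθ (hD.1 i)) (hsm τ hτ (hE.1 i))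
  · simp only [Pi.add_apply, Pi.smul_apply, Finset.sum_add_distrib, ← Finset.smul_sum]
    rw [hD.2, hE.2, ← add_smul, hθτ, one_smul]

lemma exists_herm_repr (f : Matrix ι ι ℂ →ₗ[ℝ] ℝ) :
    ∃ A : Matrix ι ι ℂ, A.IsHermitian ∧
      ∀ X : Matrix ι ι ℂ, X.IsHermitian → ((A * X).trace).re = f X := by
  set A₀ : Matrix ι ι ℂ := Matrix.of fun p q =>
    ((f (Matrix.single q p 1) : ℂ) -
      (f (Complex.I • Matrix.single q p 1) : ℂ) * Complex.I) with hA₀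
  have key : ∀ X : Matrix ι ι ℂ, ((A₀ * X).trace).re = f X := by
    intro X
    have hX : X = ∑ q : ι, ∑ p : ι,
        ((X q p).re • Matrix.single q p 1 +
          (X q p).im • (Complex.I • Matrix.single q p 1)) := by
      ext u v
      simp only [Matrix.sum_apply, Matrix.add_apply, Matrix.smul_apply,
        Matrix.single, Matrix.of_apply, smul_ite, smul_zero,
        Complex.real_smul, smul_eq_mul, mul_ite, mul_zero, mul_one, ite_and,
        Finset.sum_add_distrib, Finset.sum_ite_irrel, Finset.sum_const_zero,
        Finset.sum_ite_eq, Finset.sum_ite_eq', Finset.mem_univ, if_true]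
      exact (Complex.re_add_im _).symm
    calc ((A₀ * X).trace).re
        = ∑ p : ι, ∑ q : ι, (A₀ p q * X q p).re := by
          simp [Matrix.trace, Matrix.mul_apply, Complex.re_sum]
      _ = ∑ p : ι, ∑ q : ι,
            (f (Matrix.single q p 1) * (X q p).re +
              f (Complex.I • Matrix.single q p 1) * (X q p).im) := by
          refine Finset.sum_congr rfl fun p _ => Finset.sum_congr rfl fun q _ => ?_
          simp only [hA₀, Matrix.of_apply, Complex.mul_re, Complex.sub_re,
            Complex.sub_im, Complex.mul_im, Complex.ofReal_re, Complex.ofReal_im,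
            Complex.I_re, Complex.I_im]
          ring
      _ = f X := by
          conv_rhs => rw [hX]
          rw [map_sum]
          simp only [map_sum, map_add, LinearMap.map_smul, smul_eq_mul]
          rw [Finset.sum_comm]
          exact Finset.sum_congr rfl fun p _ => Finset.sum_congr rfl fun q _ => by ring
  refine ⟨(1/2 : ℂ) • (A₀ + A₀ᴴ), ?_, ?_⟩
  · have hstar : star ((1:ℂ)/2) = (1:ℂ)/2 := by
      rw [star_div₀, star_one]
      norm_num
    rw [Matrix.IsHermitian, Matrix.conjTranspose_smul, Matrix.conjTranspose_add,
      Matrix.conjTranspose_conjTranspose, hstar, add_comm]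
  · intro X hXh
    have h1 : (A₀ᴴ * X).trace = star ((A₀ * X).trace) := by
      calc (A₀ᴴ * X).trace = ((X * A₀)ᴴ).trace := by
            rw [Matrix.conjTranspose_mul, hXh.eq]
        _ = star ((X * A₀).trace) := Matrix.trace_conjTranspose _
        _ = star ((A₀ * X).trace) := by rw [Matrix.trace_mul_comm]
    rw [smul_mul_assoc, Matrix.trace_smul, add_mul, Matrix.trace_add, h1]
    have h2 : ((A₀ * X).trace + star ((A₀ * X).trace)) = 2 * (((A₀ * X).trace).re : ℂ) := by
      rw [Complex.star_def, Complex.add_conj]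
      push_cast
      ring
    rw [h2]
    have h3 : ((1:ℂ)/2) • (2 * (((A₀ * X).trace).re : ℂ)) = (((A₀ * X).trace).re : ℂ) := by
      rw [smul_eq_mul]
      ring
    rw [h3, Complex.ofReal_re, key]

end POVM

end Sim

open Sim in
/-- **Simulation of strategies.** If `Φ` is better than `Ψ`, then every strategy
(POVM) for `Ψ` can be simulated by a strategy for `Φ`, producing the same
(unnormalized) post-measurement states on `H_N ⊗ H_B` for every outcome. -/
theorem simulation_of_strategies (n s t : ℕ)
    (Φ : Matrix (Fin n × Fin s) (Fin n × Fin s) ℂ)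
    (Ψ : Matrix (Fin n × Fin t) (Fin n × Fin t) ℂ)
    (hΦ : IsDensity Φ) (hΨ : IsDensity Ψ)
    (hbetter : Better Φ Ψ) :
    ∀ (a b : ℕ) (ρ : Matrix (Fin a × Fin b) (Fin a × Fin b) ℂ), IsDensity ρ →
      ∀ (k : ℕ) (E : Fin k → Matrix (Fin t × Fin a) (Fin t × Fin a) ℂ), IsPOVM E →
        ∃ D : Fin k → Matrix (Fin s × Fin a) (Fin s × Fin a) ℂ, IsPOVM D ∧
          ∀ i, postState Φ ρ (D i) = postState Ψ ρ (E i) := by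
  intro a b ρ hρ k E hE
  rcases Nat.eq_zero_or_pos k with hk | hk
  · -- degenerate case `k = 0`
    subst hk
    have htne : t ≠ 0 := by
      intro ht
      subst ht
      have h0 : Ψ.trace = 0 := by
        rw [Matrix.trace]
        apply Finset.sum_eq_zero
        rintro ⟨_, j⟩ _
        exact absurd j.2 (Nat.not_lt_zero _)
      rw [hΨ.2] at h0
      exact one_ne_zero h0
    have h01 : (0 : Matrix (Fin t × Fin a) (Fin t × Fin a) ℂ) = 1 := by
      simpa using hE.2
    have ha : a = 0 := by
      by_contra ha
      have h1 : (1 : Matrix (Fin t × Fin a) (Fin t × Fin a) ℂ)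
          ((⟨0, Nat.pos_of_ne_zero htne⟩, ⟨0, Nat.pos_of_ne_zero ha⟩))
          ((⟨0, Nat.pos_of_ne_zero htne⟩, ⟨0, Nat.pos_of_ne_zero ha⟩)) = 1 :=
        Matrix.one_apply_eq _
      rw [← h01] at h1
      simp at h1
    subst ha
    refine ⟨fun i => i.elim0, ⟨fun i => i.elim0, ?_⟩, fun i => i.elim0⟩
    have : Subsingleton (Matrix (Fin s × Fin 0) (Fin s × Fin 0) ℂ) :=
      ⟨fun A B => by
        ext ⟨_, j⟩ _
        exact absurd j.2 (Nat.not_lt_zero _)⟩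
    exact Subsingleton.elim _ _
  · classical
    by_contra hcon
    push_neg at hcon
    set x : Fin k → Matrix (Fin n × Fin b) (Fin n × Fin b) ℂ :=
      fun i => postState Ψ ρ (E i) with hxdef
    let L : (Fin k → Matrix (Fin s × Fin a) (Fin s × Fin a) ℂ) →ₗ[ℝ]
        (Fin k → Matrix (Fin n × Fin b) (Fin n × Fin b) ℂ) :=
      LinearMap.pi fun i => (postStateL Φ ρ).comp (LinearMap.proj i)
    set S : Set (Fin k → Matrix (Fin n × Fin b) (Fin n × Fin b) ℂ) :=
      L '' {D | IsPOVM D} with hSdef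
    have hxS : x ∉ S := by
      rintro ⟨D, hD, hDx⟩
      obtain ⟨i, hi⟩ := hcon D hD
      exact hi (congrFun hDx i)
    have hSconv : Convex ℝ S := convex_povm.linear_image L
    have hLcont : Continuous L := L.continuous_of_finiteDimensional
    have hScl : IsClosed S := (isCompact_povm.image hLcont).isClosed
    haveI : LocallyConvexSpace ℝ (Fin k → Matrix (Fin n × Fin b) (Fin n × Fin b) ℂ) :=
      NormedSpace.toLocallyConvexSpace
    obtain ⟨f, u, hfu, hux⟩ := geometric_hahn_banach_closed_point hSconv hScl hxS
    have hrep := fun i : Fin k => exists_herm_repr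
      ((f : (Fin k → Matrix (Fin n × Fin b) (Fin n × Fin b) ℂ) →L[ℝ] ℝ).toLinearMap.comp
        (LinearMap.single ℝ (fun _ : Fin k => Matrix (Fin n × Fin b) (Fin n × Fin b) ℂ) i))
    choose M hMherm hMrep using hrep
    have hdecomp : ∀ y : Fin k → Matrix (Fin n × Fin b) (Fin n × Fin b) ℂ,
        f y = ∑ i, f (Pi.single i (y i)) := by
      intro y
      conv_lhs => rw [← Finset.univ_sum_single y]
      rw [map_sum]
    have keygen : ∀ (m : ℕ) (Θ : Matrix (Fin n × Fin m) (Fin n × Fin m) ℂ),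
        Θ.IsHermitian →
        ∀ D : Fin k → Matrix (Fin m × Fin a) (Fin m × Fin a) ℂ, IsPOVM D →
          ∑ i, payoff Θ ρ (M i) (D i) = f (fun i => postState Θ ρ (D i)) := by
      intro m Θ hΘ D hD
      rw [hdecomp]
      refine Finset.sum_congr rfl fun i _ => ?_
      rw [payoff_eq, hMrep i _ (postState_isHermitian hΘ hρ.1.1 ((hD.1 i).1))]
      rfl
    have hD0 : IsPOVM (fun i : Fin k =>
        if i = ⟨0, hk⟩ then (1 : Matrix (Fin s × Fin a) (Fin s × Fin a) ℂ) else 0) := by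
      constructor
      · intro i
        by_cases h : i = ⟨0, hk⟩ <;>
          simp [h, Matrix.PosSemidef.one, Matrix.PosSemidef.zero]
      · simp [Finset.sum_ite_eq']
    have hRΦ : Rval Φ ρ M ≤ u := by
      apply csSup_le
      · exact ⟨∑ i, payoff Φ ρ (M i)
          ((fun j : Fin k => if j = ⟨0, hk⟩
            then (1 : Matrix (Fin s × Fin a) (Fin s × Fin a) ℂ) else 0) i),
          _, hD0, rfl⟩
      · rintro r ⟨D, hD, rfl⟩
        rw [keygen s Φ hΦ.1.1 D hD]
        exact (hfu _ ⟨D, hD, rfl⟩).le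
    have hkey2 : ∑ i, payoff Ψ ρ (M i) (E i) = f x := keygen t Ψ hΨ.1.1 E hE
    have hRΨ : f x ≤ Rval Ψ ρ M := by
      apply le_csSup
      · have hcomp : IsCompact ((fun D : Fin k → Matrix (Fin t × Fin a) (Fin t × Fin a) ℂ =>
            f (fun i => postState Ψ ρ (D i))) '' {D | IsPOVM D}) := by
          apply isCompact_povm.image
          exact f.continuous.comp
            (LinearMap.pi fun i =>
              (postStateL Ψ ρ).comp (LinearMap.proj i)).continuous_of_finiteDimensional
        refine BddAbove.mono ?_ hcomp.bddAbove
        rintro r ⟨D, hD, rfl⟩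
        exact ⟨D, hD, (keygen t Ψ hΨ.1.1 D hD).symm⟩
      · exact ⟨E, hE, hkey2.symm⟩
    have hbet := hbetter a b k ρ M hρ hMherm
    linarith
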